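/- Let Σ ∈ ℝ^{d̄×d̄} be a nonzero positive semidefinite matrix, ρ ∈ ℝ^{d̄} a vector in the column space of Σ, and β* ∈ ℝ^{d̄} with Σβ* = ρ. Let X ∈ ℝ^{N×d̄}, ε ∈ ℝ^N, y = Xβ* + ε, and n > 0, and suppose ‖XᵀX/n − Σ‖_∞ ≤ q_n, ‖Xᵀε/n‖_∞ ≤ r_n, and |(1/n)‖ε‖² − σ²| ≤ s_n for some reals q_n, r_n, s_n ≥ 0 and σ² ≥ 0; let A_n = σ² + s_n and M ≥ ‖β*‖₁. Fix α > 0 and f_α(β) := ‖β‖₁ + (α/2)‖β‖². Let β̂ satisfy the constraints (1/n)‖y − Xβ̂‖² ≤ A_n and ‖β̂‖₁ ≤ M, and let β̂_P be the orthogonal projection of β̂ onto the affine set {β : Σβ = ρ}. Then f_α(β̂_P) − f_α(β̂) ≤ (√d̄ + αM) v_n^{1/2} + (α/2) v_n, where v_n := (4 M r_n + 2 s_n + 4 M² q_n) / Λ_min⁺(Σ) and Λ_min⁺(Σ) is the smallest nonzero eigenvalue of Σ. -/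

import Mathlib

namespace Statement11

/-- The ℓ₁-norm of a vector. -/
noncomputable def l1norm {m : ℕ} (v : Fin m → ℝ) : ℝ := ∑ i, |v i|

/-- The squared Euclidean norm of a vector. -/
def sqnorm {m : ℕ} (v : Fin m → ℝ) : ℝ := ∑ i, (v i) ^ 2

/-- The smallest nonzero eigenvalue of a matrix. -/
noncomputable def lamMinPos {m : ℕ} (S : Matrix (Fin m) (Fin m) ℝ) : ℝ :=
  sInf {c : ℝ | c ≠ 0 ∧ ∃ v : Fin m → ℝ, v ≠ 0 ∧ S.mulVec v = c • v}

open Matrix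

lemma sqnorm_eq_dot {m : ℕ} (v : Fin m → ℝ) : sqnorm v = dotProduct v v := by
  simp [sqnorm, dotProduct, sq]

lemma sqnorm_nonneg' {m : ℕ} (v : Fin m → ℝ) : 0 ≤ sqnorm v :=
  Finset.sum_nonneg fun _ _ => sq_nonneg _

lemma sqnorm_pos {m : ℕ} {v : Fin m → ℝ} (hv : v ≠ 0) : 0 < sqnorm v := by
  rcases Function.ne_iff.mp hv with ⟨i, hi⟩
  exact Finset.sum_pos' (fun j _ => sq_nonneg _) ⟨i, Finset.mem_univ i,
    lt_of_le_of_ne (sq_nonneg _) (Ne.symm (pow_ne_zero 2 hi))⟩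

lemma sqnorm_sub {m : ℕ} (a b : Fin m → ℝ) :
    sqnorm (a - b) = sqnorm a - 2 * dotProduct a b + sqnorm b := by
  simp only [sqnorm, dotProduct, Finset.mul_sum, ← Finset.sum_sub_distrib,
    ← Finset.sum_add_distrib]
  exact Finset.sum_congr rfl fun i _ => by simp only [Pi.sub_apply]; ring

lemma sqnorm_add {m : ℕ} (a b : Fin m → ℝ) :
    sqnorm (a + b) = sqnorm a + 2 * dotProduct a b + sqnorm b := by
  simp only [sqnorm, dotProduct, Finset.mul_sum, ← Finset.sum_add_distrib]
  exact Finset.sum_congr rfl fun i _ => by simp only [Pi.add_apply]; ring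

lemma dot_mulVec_symm {m : ℕ} {S : Matrix (Fin m) (Fin m) ℝ} (hS : S.IsHermitian)
    (x y : Fin m → ℝ) : dotProduct (S.mulVec x) y = dotProduct x (S.mulVec y) := by
  simp only [dotProduct, Matrix.mulVec, dotProduct, Finset.sum_mul, Finset.mul_sum]
  rw [Finset.sum_comm]
  refine Finset.sum_congr rfl fun i _ => Finset.sum_congr rfl fun j _ => ?_
  have h := congrFun (congrFun hS.eq i) j
  simp only [Matrix.conjTranspose_apply, star_trivial] at h
  rw [← h]; ring

section Eigen

variable {m : ℕ} {S : Matrix (Fin m) (Fin m) ℝ}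

lemma star_eq_transpose (U : Matrix (Fin m) (Fin m) ℝ) : star U = Uᵀ := by
  ext i j; simp [Matrix.star_apply]

lemma eigSet_nonneg (hS : S.PosSemidef) :
    ∀ c ∈ {c : ℝ | c ≠ 0 ∧ ∃ v : Fin m → ℝ, v ≠ 0 ∧ S.mulVec v = c • v}, 0 ≤ c := by
  rintro c ⟨-, v, hv, hev⟩
  have h0 : (0:ℝ) ≤ dotProduct (star v) (S.mulVec v) := hS.dotProduct_mulVec_nonneg v
  have hsv : star v = v := by funext i; simp
  rw [hsv, hev, dotProduct_smul, smul_eq_mul] at h0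
  have := sqnorm_pos hv
  rw [sqnorm_eq_dot] at this
  nlinarith

lemma eigSet_bddBelow (hS : S.PosSemidef) :
    BddBelow {c : ℝ | c ≠ 0 ∧ ∃ v : Fin m → ℝ, v ≠ 0 ∧ S.mulVec v = c • v} :=
  ⟨0, eigSet_nonneg hS⟩

lemma eigSet_subset (hS : S.PosSemidef) :
    {c : ℝ | c ≠ 0 ∧ ∃ v : Fin m → ℝ, v ≠ 0 ∧ S.mulVec v = c • v}
      ⊆ Set.range hS.1.eigenvalues := by
  classical
  rintro c ⟨-, v, hv, hev⟩
  set U : Matrix (Fin m) (Fin m) ℝ := (hS.1.eigenvectorUnitary : Matrix (Fin m) (Fin m) ℝ)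
    with hUdef
  set D : Matrix (Fin m) (Fin m) ℝ := Matrix.diagonal (RCLike.ofReal ∘ hS.1.eigenvalues)
    with hDdef
  have hUU : U * Uᵀ = 1 := by
    rw [← star_eq_transpose]; exact (Matrix.mem_unitaryGroup_iff).mp hS.1.eigenvectorUnitary.2
  have hUU' : Uᵀ * U = 1 := by
    rw [← star_eq_transpose]; exact (Matrix.mem_unitaryGroup_iff').mp hS.1.eigenvectorUnitary.2
  have hspec : S = U * D * Uᵀ := by
    rw [hDdef, ← star_eq_transpose]; exact hS.1.spectral_theorem
  set w : Fin m → ℝ := Uᵀ.mulVec v with hw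
  have hvw : v = U.mulVec w := by
    rw [hw, Matrix.mulVec_mulVec, hUU, Matrix.one_mulVec]
  have hwne : w ≠ 0 := by
    intro h
    rw [h, Matrix.mulVec_zero] at hvw
    exact hv hvw
  have hSv : S.mulVec v = U *ᵥ (D *ᵥ w) := by
    conv_lhs => rw [hspec]
    rw [hw]
    simp [Matrix.mulVec_mulVec, Matrix.mul_assoc]
  have hDw : D *ᵥ w = c • w := by
    have h2 := congrArg (Uᵀ.mulVec) (hSv ▸ hev)
    rwa [Matrix.mulVec_mulVec, hUU', Matrix.one_mulVec, Matrix.mulVec_smul] at h2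
  rcases Function.ne_iff.mp hwne with ⟨i, hi⟩
  rw [Pi.zero_apply] at hi
  have h3 := congrFun hDw i
  rw [hDdef] at h3
  simp only [Matrix.mulVec_diagonal, Function.comp_apply, Pi.smul_apply, smul_eq_mul,
    RCLike.ofReal_real_eq_id, id_eq] at h3
  exact ⟨i, mul_right_cancel₀ hi h3⟩

lemma lamMinPos_mem (hS : S.PosSemidef) (hSne : S ≠ 0) :
    lamMinPos S ∈ {c : ℝ | c ≠ 0 ∧ ∃ v : Fin m → ℝ, v ≠ 0 ∧ S.mulVec v = c • v} := by
  apply Set.Nonempty.csInf_mem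
  · obtain ⟨v, t, ht, hv, hev⟩ := hS.1.exists_eigenvector_of_ne_zero hSne
    exact ⟨t, ht, v, hv, hev⟩
  · exact (Set.finite_range hS.1.eigenvalues).subset (eigSet_subset hS)

lemma lamMinPos_pos (hS : S.PosSemidef) (hSne : S ≠ 0) : 0 < lamMinPos S := by
  have h := lamMinPos_mem hS hSne
  exact lt_of_le_of_ne (eigSet_nonneg hS _ h) (Ne.symm h.1)

lemma lamMinPos_mul_sqnorm_le (hS : S.PosSemidef) (d : Fin m → ℝ)
    (hker : ∀ v : Fin m → ℝ, S.mulVec v = 0 → dotProduct d v = 0) :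
    lamMinPos S * sqnorm d ≤ dotProduct d (S.mulVec d) := by
  classical
  set U : Matrix (Fin m) (Fin m) ℝ := (hS.1.eigenvectorUnitary : Matrix (Fin m) (Fin m) ℝ)
    with hUdef
  set D : Matrix (Fin m) (Fin m) ℝ := Matrix.diagonal (RCLike.ofReal ∘ hS.1.eigenvalues)
    with hDdef
  have hUU : U * Uᵀ = 1 := by
    rw [← star_eq_transpose]; exact (Matrix.mem_unitaryGroup_iff).mp hS.1.eigenvectorUnitary.2
  have hUU' : Uᵀ * U = 1 := by
    rw [← star_eq_transpose]; exact (Matrix.mem_unitaryGroup_iff').mp hS.1.eigenvectorUnitary.2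
  have hspec : S = U * D * Uᵀ := by
    rw [hDdef, ← star_eq_transpose]; exact hS.1.spectral_theorem
  have hcoleq : ∀ i, (fun j => U j i) = ⇑(hS.1.eigenvectorBasis i) := by
    intro i; funext j; rw [hUdef]; rfl
  have hcolne : ∀ i, (fun j => U j i) ≠ (0 : Fin m → ℝ) := by
    intro i h0f
    have h5 := congrFun (congrFun hUU' i) i
    rw [Matrix.mul_apply, Matrix.one_apply_eq] at h5
    have : ∀ j, U j i = 0 := fun j => congrFun h0f j
    simp only [Matrix.transpose_apply, this, mul_zero, Finset.sum_const_zero] at h5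
    exact zero_ne_one h5
  set c : Fin m → ℝ := Uᵀ.mulVec d with hc
  have hdc : d = U.mulVec c := by
    rw [hc, Matrix.mulVec_mulVec, hUU, Matrix.one_mulVec]
  have hdot : ∀ x y : Fin m → ℝ, dotProduct (U *ᵥ x) (U *ᵥ y) = dotProduct x y := by
    intro x y
    rw [Matrix.dotProduct_mulVec, ← Matrix.mulVec_transpose, Matrix.mulVec_mulVec, hUU',
      Matrix.one_mulVec]
  have h1 : sqnorm d = ∑ i, c i ^ 2 := by
    rw [sqnorm_eq_dot]
    conv_lhs => rw [hdc]
    rw [hdot, ← sqnorm_eq_dot, sqnorm]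
  have hSd : S.mulVec d = U *ᵥ (D *ᵥ c) := by
    conv_lhs => rw [hspec]
    rw [hc]
    simp [Matrix.mulVec_mulVec, Matrix.mul_assoc]
  have h2 : dotProduct d (S.mulVec d) = ∑ i, hS.1.eigenvalues i * c i ^ 2 := by
    rw [hSd]
    conv_lhs => rw [hdc]
    rw [hdot, hDdef]
    simp only [dotProduct, Matrix.mulVec_diagonal, Function.comp_apply,
      RCLike.ofReal_real_eq_id, id_eq]
    exact Finset.sum_congr rfl fun i _ => by ring
  have h3 : ∀ i, hS.1.eigenvalues i = 0 → c i = 0 := by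
    intro i h0
    have hcol : S.mulVec (fun j => U j i) = 0 := by
      rw [hcoleq i, hS.1.mulVec_eigenvectorBasis, h0, zero_smul]
    have h6 := hker _ hcol
    rw [hc]
    show ∑ j, Uᵀ i j * d j = 0
    simp only [Matrix.transpose_apply]
    rw [← h6, dotProduct]
    exact Finset.sum_congr rfl fun j _ => mul_comm _ _
  have h4 : ∀ i, hS.1.eigenvalues i ≠ 0 → lamMinPos S ≤ hS.1.eigenvalues i := by
    intro i hne
    apply csInf_le (eigSet_bddBelow hS)
    exact ⟨hne, fun j => U j i, hcolne i, by rw [hcoleq i]; exact hS.1.mulVec_eigenvectorBasis i⟩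
  rw [h1, h2, Finset.mul_sum]
  apply Finset.sum_le_sum
  intro i _
  by_cases h0 : hS.1.eigenvalues i = 0
  · rw [h0, h3 i h0]; simp
  · exact mul_le_mul_of_nonneg_right (h4 i h0) (sq_nonneg _)

end Eigen

set_option maxHeartbeats 1000000 in
/-- For any feasible `β̂` of the constrained problem and its projection `β̂_P`
onto `{β : Σβ = ρ}`, one has `f_α(β̂_P) − f_α(β̂) ≤ (√d̄ + αM)√vₙ + (α/2)vₙ`. -/
theorem statement11 (dbar N : ℕ)
    (S : Matrix (Fin dbar) (Fin dbar) ℝ) (hSpsd : S.PosSemidef) (hSne : S ≠ 0)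
    (ρ : Fin dbar → ℝ) (hρ : ∃ w, S.mulVec w = ρ)
    (βstar : Fin dbar → ℝ) (hβstar : S.mulVec βstar = ρ)
    (X : Matrix (Fin N) (Fin dbar) ℝ) (ε : Fin N → ℝ) (y : Fin N → ℝ)
    (hy : y = X.mulVec βstar + ε)
    (n : ℝ) (hn : 0 < n)
    (qn rn sn σ2 : ℝ) (hqn0 : 0 ≤ qn) (hrn0 : 0 ≤ rn) (hsn0 : 0 ≤ sn) (hσ20 : 0 ≤ σ2)
    (hqn : ∀ i j, |(∑ k, X k i * X k j) / n - S i j| ≤ qn)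
    (hrn : ∀ j, |X.transpose.mulVec ε j / n| ≤ rn)
    (hsn : |sqnorm ε / n - σ2| ≤ sn)
    (M : ℝ) (hM : l1norm βstar ≤ M)
    (α : ℝ) (hα : 0 < α)
    (βhat : Fin dbar → ℝ)
    (hβhatA : sqnorm (y - X.mulVec βhat) / n ≤ σ2 + sn)
    (hβhatM : l1norm βhat ≤ M)
    (βhatP : Fin dbar → ℝ)
    (hβhatPFeas : S.mulVec βhatP = ρ)
    (hβhatPProj : ∀ β : Fin dbar → ℝ, S.mulVec β = ρ →
      sqnorm (βhat - βhatP) ≤ sqnorm (βhat - β)) :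
    (l1norm βhatP + α / 2 * sqnorm βhatP) - (l1norm βhat + α / 2 * sqnorm βhat)
      ≤ (Real.sqrt dbar + α * M)
          * Real.sqrt ((4 * M * rn + 2 * sn + 4 * M ^ 2 * qn) / lamMinPos S)
        + α / 2 * ((4 * M * rn + 2 * sn + 4 * M ^ 2 * qn) / lamMinPos S) := by
  have hH := hSpsd.1
  have hlampos : 0 < lamMinPos S := lamMinPos_pos hSpsd hSne
  set C : ℝ := 4 * M * rn + 2 * sn + 4 * M ^ 2 * qn with hC
  set δ : Fin dbar → ℝ := βhatP - βhat with hδ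
  set u : Fin dbar → ℝ := βstar - βhat with hu
  have hM0 : 0 ≤ M := le_trans (Finset.sum_nonneg fun i _ => abs_nonneg _) hM
  -- l1 norm of u
  have hl1u : l1norm u ≤ 2 * M := by
    have h0 : l1norm u ≤ l1norm βstar + l1norm βhat := by
      rw [l1norm, l1norm, l1norm, ← Finset.sum_add_distrib]
      exact Finset.sum_le_sum fun i _ => abs_sub (βstar i) (βhat i)
    linarith
  -- kernel orthogonality of δ
  have hker : ∀ w : Fin dbar → ℝ, S.mulVec w = 0 → dotProduct δ w = 0 := by
    intro w hw
    by_cases hw0 : w = 0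
    · rw [hw0, dotProduct_zero]
    · have hsw : 0 < sqnorm w := sqnorm_pos hw0
      set a : ℝ := dotProduct (βhat - βhatP) w with ha
      set t : ℝ := a / sqnorm w with ht
      have hfeas : S.mulVec (βhatP + t • w) = ρ := by
        rw [Matrix.mulVec_add, hβhatPFeas, Matrix.mulVec_smul, hw, smul_zero, add_zero]
      have hp := hβhatPProj _ hfeas
      have hexp : βhat - (βhatP + t • w) = (βhat - βhatP) - t • w := by abel
      rw [hexp, sqnorm_sub (βhat - βhatP) (t • w)] at hp
      have hdots : dotProduct (βhat - βhatP) (t • w) = t * a := by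
        rw [ha, dotProduct_smul, smul_eq_mul]
      have hsqs : sqnorm (t • w) = t ^ 2 * sqnorm w := by
        simp only [sqnorm, Pi.smul_apply, smul_eq_mul, mul_pow, Finset.mul_sum]
      rw [hdots, hsqs] at hp
      have htw : t * sqnorm w = a := by
        rw [ht]; field_simp
      have ha0 : a = 0 := by
        have h9 : a ^ 2 ≤ 0 := by nlinarith
        have := sq_nonneg a
        nlinarith
      have hδa : δ = -(βhat - βhatP) := by rw [hδ]; abel
      rw [hδa, neg_dotProduct, ← ha, ha0, neg_zero]
  -- quadratic form bound
  have hSuu : dotProduct u (S.mulVec u) ≤ C := by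
    have hXuXu : sqnorm (X.mulVec u) = ∑ i, ∑ j, u i * u j * (∑ k, X k i * X k j) := by
      have e1 : sqnorm (X.mulVec u) = ∑ k, ∑ i, ∑ j, (X k i * u i) * (X k j * u j) := by
        rw [sqnorm_eq_dot]
        refine Finset.sum_congr rfl fun k _ => ?_
        show (∑ i, X k i * u i) * (∑ j, X k j * u j) = _
        exact Finset.sum_mul_sum _ _ _ _
      rw [e1, Finset.sum_comm]
      refine Finset.sum_congr rfl fun i _ => ?_
      rw [Finset.sum_comm]
      refine Finset.sum_congr rfl fun j _ => ?_
      rw [Finset.mul_sum]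
      exact Finset.sum_congr rfl fun k _ => by ring
    have hsplit : dotProduct u (S.mulVec u)
        = (∑ i, ∑ j, u i * u j * (S i j - (∑ k, X k i * X k j) / n))
          + sqnorm (X.mulVec u) / n := by
      rw [hXuXu, dotProduct, Finset.sum_div, ← Finset.sum_add_distrib]
      refine Finset.sum_congr rfl fun i _ => ?_
      show u i * (∑ j, S i j * u j) = _
      rw [Finset.mul_sum, Finset.sum_div, ← Finset.sum_add_distrib]
      refine Finset.sum_congr rfl fun j _ => ?_
      ring
    have hterm1 : (∑ i, ∑ j, u i * u j * (S i j - (∑ k, X k i * X k j) / n))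
        ≤ qn * l1norm u ^ 2 := by
      have e2 : ∀ i j : Fin dbar, u i * u j * (S i j - (∑ k, X k i * X k j) / n)
          ≤ |u i| * |u j| * qn := by
        intro i j
        calc u i * u j * (S i j - (∑ k, X k i * X k j) / n)
            ≤ |u i * u j * (S i j - (∑ k, X k i * X k j) / n)| := le_abs_self _
          _ = |u i| * |u j| * |S i j - (∑ k, X k i * X k j) / n| := by
              rw [abs_mul, abs_mul]
          _ ≤ |u i| * |u j| * qn := by
              have h6 := hqn i j
              rw [abs_sub_comm] at h6
              exact mul_le_mul_of_nonneg_left h6 (mul_nonneg (abs_nonneg _) (abs_nonneg _))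
      calc (∑ i, ∑ j, u i * u j * (S i j - (∑ k, X k i * X k j) / n))
          ≤ ∑ i, ∑ j, |u i| * |u j| * qn :=
            Finset.sum_le_sum fun i _ => Finset.sum_le_sum fun j _ => e2 i j
        _ = qn * l1norm u ^ 2 := by
            rw [l1norm, sq, Finset.sum_mul_sum, Finset.mul_sum]
            refine Finset.sum_congr rfl fun i _ => ?_
            rw [Finset.mul_sum]
            exact Finset.sum_congr rfl fun j _ => by ring
    have hXu : X.mulVec u = (y - X.mulVec βhat) - ε := by
      rw [hu, hy, Matrix.mulVec_sub]
      abel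
    have ha : y - X.mulVec βhat = X.mulVec u + ε := by rw [hXu]; abel
    have hnormXu : sqnorm (X.mulVec u)
        = sqnorm (y - X.mulVec βhat) - 2 * dotProduct (X.mulVec u) ε - sqnorm ε := by
      have e3 := sqnorm_sub (y - X.mulVec βhat) ε
      rw [← hXu] at e3
      have e4 : dotProduct (y - X.mulVec βhat) ε = dotProduct (X.mulVec u) ε + sqnorm ε := by
        rw [ha, add_dotProduct, ← sqnorm_eq_dot]
      rw [e3, e4]; ring
    have hdotXue : |dotProduct (X.mulVec u) ε| ≤ 2 * M * rn * n := by
      have e5 : dotProduct (X.mulVec u) ε = dotProduct u (X.transpose.mulVec ε) := by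
        rw [dotProduct_comm, Matrix.dotProduct_mulVec, ← Matrix.mulVec_transpose, dotProduct_comm]
      rw [e5]
      calc |dotProduct u (X.transpose.mulVec ε)| ≤ ∑ j, |u j * X.transpose.mulVec ε j| :=
            Finset.abs_sum_le_sum_abs _ _
        _ ≤ ∑ j, |u j| * (rn * n) := by
            refine Finset.sum_le_sum fun j _ => ?_
            rw [abs_mul]
            refine mul_le_mul_of_nonneg_left ?_ (abs_nonneg _)
            have h6 := hrn j
            have e6 : |X.transpose.mulVec ε j| = |X.transpose.mulVec ε j / n| * n := by
              rw [abs_div, abs_of_pos hn, div_mul_cancel₀]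
              exact ne_of_gt hn
            rw [e6]
            exact mul_le_mul_of_nonneg_right h6 (le_of_lt hn)
        _ = l1norm u * (rn * n) := by rw [l1norm, Finset.sum_mul]
        _ ≤ 2 * M * (rn * n) := mul_le_mul_of_nonneg_right hl1u (by positivity)
        _ = 2 * M * rn * n := by ring
    have hεlow : σ2 - sn ≤ sqnorm ε / n := by
      have h7 := abs_le.mp hsn
      linarith [h7.1]
    have hdotn : -(2 * M * rn) ≤ dotProduct (X.mulVec u) ε / n := by
      rw [le_div_iff₀ hn]
      have h8 := (abs_le.mp hdotXue).1
      linarith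
    have hXun : sqnorm (X.mulVec u) / n ≤ 2 * sn + 4 * M * rn := by
      have h11 : sqnorm (X.mulVec u) / n
          = sqnorm (y - X.mulVec βhat) / n - 2 * (dotProduct (X.mulVec u) ε / n)
            - sqnorm ε / n := by
        rw [hnormXu]; ring
      rw [h11]
      linarith
    rw [hsplit, hC]
    have hpow : l1norm u ^ 2 ≤ (2 * M) ^ 2 :=
      pow_le_pow_left₀ (Finset.sum_nonneg fun i _ => abs_nonneg _) hl1u 2
    have h15 : qn * l1norm u ^ 2 ≤ qn * (2 * M) ^ 2 := mul_le_mul_of_nonneg_left hpow hqn0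
    have h14 : qn * (2 * M) ^ 2 = 4 * M ^ 2 * qn := by ring
    linarith
  -- δ and u have the same quadratic form
  have hSδu : S.mulVec δ = S.mulVec u := by
    rw [hδ, hu, Matrix.mulVec_sub, Matrix.mulVec_sub, hβhatPFeas, hβstar]
  have hδu0 : S.mulVec (δ - u) = 0 := by rw [Matrix.mulVec_sub, hSδu, sub_self]
  have hδSδ : dotProduct δ (S.mulVec δ) = dotProduct u (S.mulVec u) := by
    have e2 : dotProduct (δ - u) (S.mulVec δ) = 0 := by
      rw [← dot_mulVec_symm hH, hδu0, zero_dotProduct]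
    rw [sub_dotProduct] at e2
    have e2' : dotProduct δ (S.mulVec δ) = dotProduct u (S.mulVec δ) := by linarith
    rw [e2', hSδu]
  -- the key sqnorm bound
  have hkey := lamMinPos_mul_sqnorm_le hSpsd δ hker
  have hδle : sqnorm δ ≤ C / lamMinPos S := by
    rw [le_div_iff₀ hlampos, mul_comm]
    linarith
  have hv0 : 0 ≤ C / lamMinPos S := le_trans (sqnorm_nonneg' δ) hδle
  set sv : ℝ := Real.sqrt (C / lamMinPos S) with hsv
  have hsv0 : 0 ≤ sv := Real.sqrt_nonneg _
  have hsδ : Real.sqrt (sqnorm δ) ≤ sv := Real.sqrt_le_sqrt hδle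
  have hsqd0 : 0 ≤ Real.sqrt (sqnorm δ) := Real.sqrt_nonneg _
  have habs_i : ∀ i, |δ i| ≤ Real.sqrt (sqnorm δ) := by
    intro i
    have h7 : δ i ^ 2 ≤ sqnorm δ :=
      Finset.single_le_sum (f := fun j => δ j ^ 2) (fun j _ => sq_nonneg (δ j))
        (Finset.mem_univ i)
    calc |δ i| = Real.sqrt (δ i ^ 2) := (Real.sqrt_sq_eq_abs _).symm
      _ ≤ _ := Real.sqrt_le_sqrt h7
  -- (a) l1 bound
  have hPa : βhatP = βhat + δ := by rw [hδ]; abel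
  have hl1P : l1norm βhatP ≤ l1norm βhat + l1norm δ := by
    rw [l1norm, l1norm, l1norm, ← Finset.sum_add_distrib, hPa]
    exact Finset.sum_le_sum fun i _ => abs_add_le (βhat i) (δ i)
  -- (b) l1 δ ≤ √dbar √sqnormδ
  have hl1δ0 : 0 ≤ l1norm δ := Finset.sum_nonneg fun i _ => abs_nonneg _
  have hl1δ : l1norm δ ≤ Real.sqrt dbar * Real.sqrt (sqnorm δ) := by
    have h8 : (l1norm δ) ^ 2 ≤ dbar * sqnorm δ := by
      have h8' := Finset.sum_mul_sq_le_sq_mul_sq Finset.univ (fun _ : Fin dbar => (1:ℝ))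
        (fun i => |δ i|)
      simpa [l1norm, sqnorm, sq_abs, Finset.card_univ] using h8'
    calc l1norm δ = Real.sqrt ((l1norm δ) ^ 2) := (Real.sqrt_sq hl1δ0).symm
      _ ≤ Real.sqrt (dbar * sqnorm δ) := Real.sqrt_le_sqrt h8
      _ = Real.sqrt dbar * Real.sqrt (sqnorm δ) := Real.sqrt_mul (Nat.cast_nonneg _) _
  -- (c) square expansion
  have hsqP : sqnorm βhatP = sqnorm βhat + 2 * dotProduct βhat δ + sqnorm δ := by
    rw [hPa, sqnorm_add]
  -- (d) cross term
  have hcross : dotProduct βhat δ ≤ M * sv := by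
    have h10 : dotProduct βhat δ ≤ ∑ i, |βhat i| * Real.sqrt (sqnorm δ) := by
      refine le_trans (Finset.sum_le_sum fun i _ => le_abs_self _) ?_
      refine Finset.sum_le_sum fun i _ => ?_
      rw [abs_mul]
      exact mul_le_mul_of_nonneg_left (habs_i i) (abs_nonneg _)
    rw [← Finset.sum_mul] at h10
    calc dotProduct βhat δ ≤ l1norm βhat * Real.sqrt (sqnorm δ) := h10
      _ ≤ M * sv := mul_le_mul hβhatM hsδ hsqd0 hM0
  -- final assembly
  have hfin1 : l1norm βhatP - l1norm βhat ≤ Real.sqrt dbar * sv := by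
    have := mul_le_mul_of_nonneg_left hsδ (Real.sqrt_nonneg (dbar : ℝ))
    linarith
  have hfin2 : α / 2 * (sqnorm βhatP - sqnorm βhat) ≤ α / 2 * (2 * M * sv + C / lamMinPos S) := by
    apply mul_le_mul_of_nonneg_left _ (by linarith)
    rw [hsqP]
    linarith
  nlinarith [hfin1, hfin2]

end Statement11
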